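/- Let P be a finitely additive probability on ({0,1}^∞, Σ) such that whenever P = αQ + (1−α)R with α ∈ (0,1) and Q, R finitely additive probabilities, P merges with both Q and R. Then P is an extreme point of the set of finitely additive extensions to Σ of its restriction to the algebra F generated by cylinders. -/

import Mathlib

open Filter Topology


/-- A path in `{0,1}^∞`. -/
abbrev BinSeq := ℕ → Bool

/-- The cylinder of length `t` with base `ω`: all sequences agreeing with `ω`
in the first `t` coordinates. -/
def cyl {X : Type*} (ω : ℕ → X) (t : ℕ) : Set (ℕ → X) := {ω' | ∀ i < t, ω' i = ω i}

/-- An algebra of subsets of `Ω`. -/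
structure SetAlgebra (Ω : Type*) where
  sets : Set (Set Ω)
  univ_mem : Set.univ ∈ sets
  compl_mem : ∀ S ∈ sets, Sᶜ ∈ sets
  union_mem : ∀ S ∈ sets, ∀ T ∈ sets, S ∪ T ∈ sets

/-- The algebra is a σ-algebra: closed under countable unions. -/
def SetAlgebra.IsSigmaAlgebra {Ω : Type*} (A : SetAlgebra Ω) : Prop :=
  ∀ f : ℕ → Set Ω, (∀ n, f n ∈ A.sets) → (⋃ n, f n) ∈ A.sets

/-- The power-set algebra. -/
def SetAlgebra.top (Ω : Type*) : SetAlgebra Ω :=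
  ⟨Set.univ, trivial, fun _ _ => trivial, fun _ _ _ _ => trivial⟩

/-- A finitely additive probability on `(Ω, A)`.  The function `m` is defined on all
subsets for convenience; only its values on `A.sets` are constrained. -/
structure FA {Ω : Type*} (A : SetAlgebra Ω) where
  m : Set Ω → ℝ
  nonneg : ∀ S ∈ A.sets, 0 ≤ m S
  total : m Set.univ = 1
  add : ∀ S ∈ A.sets, ∀ T ∈ A.sets, Disjoint S T → m (S ∪ T) = m S + m T

/-- Conditional probability `P(E | C) = P(E ∩ C) / P(C)`. -/
noncomputable def FA.cond {Ω : Type*} {A : SetAlgebra Ω} (P : FA A) (E C : Set Ω) : ℝ :=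
  P.m (E ∩ C) / P.m C

/-- `Q` is absolutely continuous w.r.t. `P` (written `Q ≪ P` in the paper):
for every sequence of events, `P(Eₙ) → 0` implies `Q(Eₙ) → 0`. -/
def AbsCont {Ω : Type*} {A : SetAlgebra Ω} (P Q : FA A) : Prop :=
  ∀ E : ℕ → Set Ω, (∀ n, E n ∈ A.sets) →
    Tendsto (fun n => P.m (E n)) atTop (𝓝 0) → Tendsto (fun n => Q.m (E n)) atTop (𝓝 0)

/-- `P` merges with `Q`: for every `ε > 0`, the `Q`-probability of the set of paths where
some event has conditional probabilities (given the first `t` coordinates) differing by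
more than `ε` tends to `0` as `t → ∞`.  (`sup_E |P(E|ωᵗ) - Q(E|ωᵗ)| > ε` is expressed
equivalently as `∃ E`.) -/
def Merges {A : SetAlgebra BinSeq} (P Q : FA A) : Prop :=
  ∀ ε > 0, Tendsto
    (fun t => Q.m {ω | ∃ E ∈ A.sets, ε < |P.cond E (cyl ω t) - Q.cond E (cyl ω t)|})
    atTop (𝓝 0)

/-- Membership in the algebra `F` generated by the cylinders of `{0,1}^∞`:
the finite unions of cylinders (the empty union giving `∅`). -/
def InCylAlg (S : Set BinSeq) : Prop :=
  ∃ (n : ℕ) (f : Fin n → BinSeq × ℕ), S = ⋃ i, cyl (f i).1 (f i).2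

/-- `Q` agrees with `P` on the algebra generated by cylinders, i.e. `Q` is an
extension of `P_F` from `F` to `Σ`. -/
def ExtAgree {A : SetAlgebra BinSeq} (P Q : FA A) : Prop :=
  ∀ S, InCylAlg S → Q.m S = P.m S

/-- `P` is an extreme point of the set `E(P_F, F, Σ)` of extensions of its restriction
to the cylinder algebra: any representation of `P` as a nontrivial convex combination
of two extensions forces the two extensions to coincide (with `P`). -/
def ExtremePoint {A : SetAlgebra BinSeq} (P : FA A) : Prop :=
  ∀ Q R : FA A, ExtAgree P Q → ExtAgree P R →
    ∀ α : ℝ, 0 < α → α < 1 →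
      (∀ S ∈ A.sets, P.m S = α * Q.m S + (1 - α) * R.m S) →
      ∀ S ∈ A.sets, Q.m S = R.m S

/-- `P` is strongly nonatomic (Savagean): every event can be split in any proportion. -/
def StronglyNonatomic {Ω : Type*} {A : SetAlgebra Ω} (P : FA A) : Prop :=
  ∀ E ∈ A.sets, ∀ α : ℝ, 0 ≤ α → α ≤ 1 → ∃ F ∈ A.sets, F ⊆ E ∧ P.m F = α * P.m E

/-- The Blackwell–Dubins property: `P` merges with every `Q ≪ P`. -/
def BDProp {A : SetAlgebra BinSeq} (P : FA A) : Prop :=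
  ∀ Q : FA A, AbsCont P Q → Merges P Q

section AuxLemmas

open Classical in
noncomputable def _dummy : ℕ := 0

variable {Ω : Type*} {A : SetAlgebra Ω}

lemma SetAlgebra.inter_mem' (A : SetAlgebra Ω) {S T : Set Ω}
    (hS : S ∈ A.sets) (hT : T ∈ A.sets) : S ∩ T ∈ A.sets := by
  have h := A.compl_mem _ (A.union_mem _ (A.compl_mem _ hS) _ (A.compl_mem _ hT))
  simpa [Set.compl_union] using h

lemma SetAlgebra.empty_mem' (A : SetAlgebra Ω) : (∅ : Set Ω) ∈ A.sets := by
  simpa using A.compl_mem _ A.univ_mem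

lemma FA.m_empty (P : FA A) : P.m ∅ = 0 := by
  have h := P.add ∅ A.empty_mem' ∅ A.empty_mem' (by simp)
  simp only [Set.union_self] at h
  linarith

lemma FA.m_mono (P : FA A) {S T : Set Ω} (hS : S ∈ A.sets) (hT : T ∈ A.sets)
    (hsub : S ⊆ T) : P.m S ≤ P.m T := by
  have hmem : T ∩ Sᶜ ∈ A.sets := A.inter_mem' hT (A.compl_mem _ hS)
  have hunion : T = S ∪ T ∩ Sᶜ := by
    ext x
    constructor
    · intro hx
      by_cases h : x ∈ S
      · exact Or.inl h
      · exact Or.inr ⟨hx, h⟩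
    · rintro (h | ⟨h, _⟩)
      · exact hsub h
      · exact h
  have hdisj : Disjoint S (T ∩ Sᶜ) := by
    rw [Set.disjoint_left]
    rintro x hx ⟨_, hx'⟩
    exact hx' hx
  have hadd := P.add S hS _ hmem hdisj
  rw [← hunion] at hadd
  linarith [P.nonneg _ hmem]

lemma SetAlgebra.finset_biUnion_mem {ι : Type*} (A : SetAlgebra Ω) (f : ι → Set Ω) :
    ∀ s : Finset ι, (∀ i ∈ s, f i ∈ A.sets) → (⋃ i ∈ s, f i) ∈ A.sets := by
  classical
  intro s
  induction s using Finset.induction_on with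
  | empty => intro _; simpa using A.empty_mem'
  | @insert a s ha ih =>
    intro hf
    rw [Finset.set_biUnion_insert]
    exact A.union_mem _ (hf a (by simp)) _ (ih fun i hi => hf i (by simp [hi]))

lemma FA.m_biUnion {ι : Type*} (P : FA A) (f : ι → Set Ω)
    (hdisj : Pairwise (Function.onFun Disjoint f)) :
    ∀ s : Finset ι, (∀ i ∈ s, f i ∈ A.sets) →
      P.m (⋃ i ∈ s, f i) = ∑ i ∈ s, P.m (f i) := by
  classical
  intro s
  induction s using Finset.induction_on with
  | empty => intro _; simp [P.m_empty]
  | @insert a s ha ih =>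
    intro hf
    rw [Finset.set_biUnion_insert, Finset.sum_insert ha,
      ← ih (fun i hi => hf i (by simp [hi]))]
    refine P.add _ (hf a (by simp)) _
      (A.finset_biUnion_mem f s fun i hi => hf i (by simp [hi])) ?_
    rw [Set.disjoint_left]
    intro x hx hx'
    simp only [Set.mem_iUnion] at hx'
    obtain ⟨i, hi, hxi⟩ := hx'
    have hne : a ≠ i := by rintro rfl; exact ha hi
    exact Set.disjoint_left.mp (hdisj hne) hx hxi

end AuxLemmas

section CylAux

/-- Representative sequence of a length-`t` pattern. -/
def repFn {t : ℕ} (b : Fin t → Bool) : BinSeq := fun i => if h : i < t then b ⟨i, h⟩ else false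

lemma cyl_eq_of_agree {ω ω' : BinSeq} {t : ℕ} (h : ∀ i < t, ω i = ω' i) :
    cyl ω t = cyl ω' t := by
  ext x
  exact ⟨fun hx i hi => (hx i hi).trans (h i hi), fun hx i hi => (hx i hi).trans (h i hi).symm⟩

lemma cyl_repFn_trunc (ω : BinSeq) (t : ℕ) :
    cyl ω t = cyl (repFn (fun i : Fin t => ω i)) t :=
  cyl_eq_of_agree fun i hi => by simp [repFn, hi]

lemma mem_cyl_repFn {t : ℕ} {b : Fin t → Bool} {ω : BinSeq} :
    ω ∈ cyl (repFn b) t ↔ (fun i : Fin t => ω i) = b := by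
  constructor
  · intro h
    funext i
    have := h i i.2
    simpa [repFn, i.2] using this
  · intro h i hi
    have := congrFun h ⟨i, hi⟩
    simpa [repFn, hi] using this

lemma cyl_repFn_pairwise (t : ℕ) :
    Pairwise (Function.onFun Disjoint (fun b : Fin t → Bool => cyl (repFn b) t)) := by
  intro b b' hbb
  simp only [Function.onFun]
  rw [Set.disjoint_left]
  intro ω h1 h2
  exact hbb ((mem_cyl_repFn.mp h1).symm.trans (mem_cyl_repFn.mp h2))

lemma iUnion_cyl_repFn (t : ℕ) :
    (⋃ b ∈ (Finset.univ : Finset (Fin t → Bool)), cyl (repFn b) t) = Set.univ := by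
  ext ω
  simp only [Set.mem_iUnion, Set.mem_univ, iff_true, Finset.mem_univ, exists_true_left]
  exact ⟨fun i : Fin t => ω i, mem_cyl_repFn.mpr rfl⟩

lemma inCylAlg_cyl (ω : BinSeq) (t : ℕ) : InCylAlg (cyl ω t) :=
  ⟨1, fun _ => (ω, t), (Set.iUnion_const _).symm⟩

lemma inCylAlg_biUnion {t : ℕ} (s : Finset (Fin t → Bool)) :
    InCylAlg (⋃ b ∈ s, cyl (repFn b) t) := by
  classical
  refine ⟨s.card, fun i => (repFn ((s.equivFin.symm i : s) : Fin t → Bool), t), ?_⟩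
  ext ω
  simp only [Set.mem_iUnion]
  constructor
  · rintro ⟨b, hb, hmem⟩
    refine ⟨s.equivFin ⟨b, hb⟩, ?_⟩
    simpa [Equiv.symm_apply_apply] using hmem
  · rintro ⟨i, hmem⟩
    exact ⟨_, (s.equivFin.symm i).2, hmem⟩

end CylAux

lemma agree_of_merges (A : SetAlgebra BinSeq)
    (hcyl : ∀ (ω : BinSeq) (t : ℕ), cyl ω t ∈ A.sets)
    (P M : FA A) (hagree : ExtAgree P M) (hm : Merges P M)
    {S : Set BinSeq} (hS : S ∈ A.sets) : M.m S = P.m S := by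
  classical
  have main : ∀ ε : ℝ, 0 < ε → |M.m S - P.m S| ≤ 3 * ε := by
    intro ε hε
    obtain ⟨t, ht⟩ := ((hm ε hε).eventually (gt_mem_nhds hε)).exists
    set B : Set BinSeq :=
      {ω | ∃ E ∈ A.sets, ε < |P.cond E (cyl ω t) - M.cond E (cyl ω t)|} with hBdef
    -- `ht : M.m B < ε`
    set Bad : Finset (Fin t → Bool) := Finset.univ.filter (fun b => repFn b ∈ B) with hBad
    have hBmem : ∀ ω : BinSeq, ω ∈ B ↔ (fun i : Fin t => ω i) ∈ Bad := by
      intro ω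
      have hc : cyl ω t = cyl (repFn fun i : Fin t => ω i) t := cyl_repFn_trunc ω t
      simp only [hBad, Finset.mem_filter, Finset.mem_univ, true_and, hBdef,
        Set.mem_setOf_eq, hc]
    have hBeq : B = ⋃ b ∈ Bad, cyl (repFn b) t := by
      ext ω
      simp only [Set.mem_iUnion]
      constructor
      · intro hω
        exact ⟨_, (hBmem ω).mp hω, mem_cyl_repFn.mpr rfl⟩
      · rintro ⟨b, hb, hmem⟩
        rw [hBmem ω, mem_cyl_repFn.mp hmem]
        exact hb
    have hBA : B ∈ A.sets := by
      rw [hBeq]; exact A.finset_biUnion_mem _ Bad fun b _ => hcyl _ t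
    have hBP : M.m B = P.m B := by
      rw [hBeq]; exact hagree _ (inCylAlg_biUnion Bad)
    have hCb : ∀ b : Fin t → Bool, cyl (repFn b) t ∈ A.sets := fun b => hcyl _ t
    have hSC : ∀ b : Fin t → Bool, S ∩ cyl (repFn b) t ∈ A.sets :=
      fun b => A.inter_mem' hS (hCb b)
    have hmC : ∀ b : Fin t → Bool, M.m (cyl (repFn b) t) = P.m (cyl (repFn b) t) :=
      fun b => hagree _ (inCylAlg_cyl _ t)
    have hdisjSC : Pairwise (Function.onFun Disjoint
        (fun b : Fin t → Bool => S ∩ cyl (repFn b) t)) := by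
      intro b b' hbb
      exact Disjoint.mono Set.inter_subset_right Set.inter_subset_right
        (cyl_repFn_pairwise t hbb)
    have hScover : S = ⋃ b ∈ (Finset.univ : Finset (Fin t → Bool)), S ∩ cyl (repFn b) t := by
      ext ω
      simp only [Set.mem_iUnion, Set.mem_inter_iff, Finset.mem_univ, exists_true_left]
      constructor
      · intro h
        exact ⟨fun i : Fin t => ω i, h, mem_cyl_repFn.mpr rfl⟩
      · rintro ⟨b, h, _⟩
        exact h
    have hPsum : P.m S = ∑ b : Fin t → Bool, P.m (S ∩ cyl (repFn b) t) := by
      have h := P.m_biUnion _ hdisjSC Finset.univ (fun b _ => hSC b)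
      rw [← hScover] at h
      exact h
    have hMsum : M.m S = ∑ b : Fin t → Bool, M.m (S ∩ cyl (repFn b) t) := by
      have h := M.m_biUnion _ hdisjSC Finset.univ (fun b _ => hSC b)
      rw [← hScover] at h
      exact h
    -- the sums of cylinder measures
    have hPB : ∑ b ∈ Bad, P.m (cyl (repFn b) t) = P.m B := by
      rw [hBeq]
      exact (P.m_biUnion _ (cyl_repFn_pairwise t) Bad (fun b _ => hCb b)).symm
    have hMB : ∑ b ∈ Bad, M.m (cyl (repFn b) t) = M.m B := by
      rw [hBeq]
      exact (M.m_biUnion _ (cyl_repFn_pairwise t) Bad (fun b _ => hCb b)).symm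
    have hPuniv : ∑ b : Fin t → Bool, P.m (cyl (repFn b) t) = 1 := by
      have h := P.m_biUnion _ (cyl_repFn_pairwise t) Finset.univ (fun b _ => hCb b)
      rw [iUnion_cyl_repFn t, P.total] at h
      exact h.symm
    -- good cylinder bound
    have hgood : ∀ b : Fin t → Bool, b ∉ Bad →
        |M.m (S ∩ cyl (repFn b) t) - P.m (S ∩ cyl (repFn b) t)|
          ≤ ε * P.m (cyl (repFn b) t) := by
      intro b hb
      set C : Set BinSeq := cyl (repFn b) t with hC
      have hnot : ¬ repFn b ∈ B := by
        simpa [hBad] using hb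
      rw [hBdef] at hnot
      simp only [Set.mem_setOf_eq] at hnot
      push_neg at hnot
      have hcond : |P.cond S C - M.cond S C| ≤ ε := by
        have h := hnot S hS
        rwa [cyl_eq_of_agree (fun i hi => rfl)] at h
      have hmc : M.m C = P.m C := hmC b
      have hPle : P.m (S ∩ C) ≤ P.m C := P.m_mono (hSC b) (hCb b) Set.inter_subset_right
      have hMle : M.m (S ∩ C) ≤ M.m C := M.m_mono (hSC b) (hCb b) Set.inter_subset_right
      have hP0 : 0 ≤ P.m (S ∩ C) := P.nonneg _ (hSC b)
      have hM0 : 0 ≤ M.m (S ∩ C) := M.nonneg _ (hSC b)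
      rcases eq_or_lt_of_le (P.nonneg _ (hCb b)) with h0 | hpos
      · have h1 : P.m (S ∩ C) = 0 := le_antisymm (by rw [← h0] at hPle; exact hPle) hP0
        have h2 : M.m (S ∩ C) = 0 := le_antisymm (by rw [hmc, ← h0] at hMle; exact hMle) hM0
        simp [h1, h2, ← h0]
        exact mul_nonneg hε.le (P.nonneg _ (hCb b))
      · have hcond' : |P.m (S ∩ C) / P.m C - M.m (S ∩ C) / P.m C| ≤ ε := by
          simpa [FA.cond, hmc] using hcond
        rw [div_sub_div_same, abs_div, abs_of_pos hpos] at hcond'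
        rw [abs_sub_comm]
        exact (div_le_iff₀ hpos).mp hcond'
    -- bad cylinder bound
    have hbad : ∀ b ∈ Bad,
        |M.m (S ∩ cyl (repFn b) t) - P.m (S ∩ cyl (repFn b) t)|
          ≤ P.m (cyl (repFn b) t) + M.m (cyl (repFn b) t) := by
      intro b _
      have hPle : P.m (S ∩ _) ≤ P.m (cyl (repFn b) t) :=
        P.m_mono (hSC b) (hCb b) Set.inter_subset_right
      have hMle : M.m (S ∩ _) ≤ M.m (cyl (repFn b) t) :=
        M.m_mono (hSC b) (hCb b) Set.inter_subset_right
      have hP0 : 0 ≤ P.m (S ∩ cyl (repFn b) t) := P.nonneg _ (hSC b)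
      have hM0 : 0 ≤ M.m (S ∩ cyl (repFn b) t) := M.nonneg _ (hSC b)
      rw [abs_le]
      constructor <;> linarith
    have hsplit := Finset.sum_sdiff (Finset.subset_univ Bad)
      (f := fun b => |M.m (S ∩ cyl (repFn b) t) - P.m (S ∩ cyl (repFn b) t)|)
    calc |M.m S - P.m S|
        = |∑ b : Fin t → Bool,
            (M.m (S ∩ cyl (repFn b) t) - P.m (S ∩ cyl (repFn b) t))| := by
          rw [hMsum, hPsum, Finset.sum_sub_distrib]
      _ ≤ ∑ b : Fin t → Bool,
            |M.m (S ∩ cyl (repFn b) t) - P.m (S ∩ cyl (repFn b) t)| :=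
          Finset.abs_sum_le_sum_abs _ _
      _ = (∑ b ∈ Finset.univ \ Bad,
            |M.m (S ∩ cyl (repFn b) t) - P.m (S ∩ cyl (repFn b) t)|)
          + ∑ b ∈ Bad,
            |M.m (S ∩ cyl (repFn b) t) - P.m (S ∩ cyl (repFn b) t)| := hsplit.symm
      _ ≤ (∑ b : Fin t → Bool, ε * P.m (cyl (repFn b) t))
          + ∑ b ∈ Bad, (P.m (cyl (repFn b) t) + M.m (cyl (repFn b) t)) := by
          refine add_le_add ?_ (Finset.sum_le_sum hbad)
          refine le_trans (Finset.sum_le_sum fun b hb =>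
            hgood b (by simpa using (Finset.mem_sdiff.mp hb).2)) ?_
          refine Finset.sum_le_sum_of_subset_of_nonneg (Finset.subset_univ _) ?_
          intro b _ _
          exact mul_nonneg hε.le (P.nonneg _ (hCb b))
      _ = ε + (P.m B + M.m B) := by
          rw [← Finset.mul_sum, hPuniv, mul_one, Finset.sum_add_distrib, hPB, hMB]
      _ ≤ 3 * ε := by
          rw [hBP] at ht ⊢
          have hB0 : 0 ≤ P.m B := P.nonneg _ hBA
          linarith
  by_contra hne
  have hpos : 0 < |M.m S - P.m S| := abs_pos.mpr (sub_ne_zero.mpr hne)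
  have h4 := main (|M.m S - P.m S| / 4) (by positivity)
  linarith
/-- Theorem 8, (3) ⟹ (1): if `P` merges with both components of any
nontrivial convex decomposition of itself, then `P` is an extreme point of the set of
extensions of its restriction to the cylinder algebra. -/
theorem merging_with_components_implies_extremePoint
    (A : SetAlgebra BinSeq) (hσ : A.IsSigmaAlgebra)
    (hcyl : ∀ (ω : BinSeq) (t : ℕ), cyl ω t ∈ A.sets)
    (P : FA A)
    (hmerge : ∀ Q R : FA A, ∀ α : ℝ, 0 < α → α < 1 →
      (∀ S ∈ A.sets, P.m S = α * Q.m S + (1 - α) * R.m S) →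
      Merges P Q ∧ Merges P R) :
    ExtremePoint P := by
  intro Q R hQ hR α hα0 hα1 hconv S hS
  obtain ⟨hPQ, hPR⟩ := hmerge Q R α hα0 hα1 hconv
  rw [agree_of_merges A hcyl P Q hQ hPQ hS, agree_of_merges A hcyl P R hR hPR hS]
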